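/- arXiv:2002.12808 — 2 statements merged into one kernel-verified Lean document; each statement's English description precedes it below -/
import Mathlib

section
/- Let $a < b$ be real numbers, let $n_1, n_2 > 0$, let $g : [a,b] \to \mathbb{R}$ be continuous, and set $f := J_a^{n_1+n_2} g$. Then with $m_2 := \lceil n_2 \rceil$ and $M := \lceil n_1+n_2 \rceil$: the function $J_a^{m_2-n_2} f$ is $m_2$-times differentiable on $[a,b]$ with $m_2$-th derivative equal to $J_a^{n_1} g$ everywhere (so $D_a^{n_2} f = J_a^{n_1} g$), the fractional derivatives $D_a^{n_1}(D_a^{n_2} f)$ and $D_a^{n_1+n_2} f$ exist classically everywhere on $[a,b]$, and $D_a^{n_1}(D_a^{n_2} f)(x) = D_a^{n_1+n_2} f(x) = g(x)$ for all $x \in [a,b]$. (This is the paper's composition theorem for Riemann–Liouville fractional derivatives applied to elements of the range of $\mathcal{J}_a^{n_1+n_2}$, stated for continuous $g$.) -/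
open MeasureTheory Set

/-- The Riemann–Liouville fractional integral of order `n` based at `a`,
with `J_a^0` the identity operator. -/
noncomputable def rlInt (a n : ℝ) (h : ℝ → ℝ) : ℝ → ℝ :=
  if n = 0 then h else fun x => (1 / Real.Gamma n) * ∫ t in a..x, (x - t) ^ (n - 1) * h t

section RLAux

open intervalIntegral Topology Filter

lemma rlInt_zero (a : ℝ) (h : ℝ → ℝ) : rlInt a 0 h = h := by simp [rlInt]

lemma rlInt_def {n : ℝ} (hn : n ≠ 0) (a : ℝ) (h : ℝ → ℝ) (x : ℝ) :
    rlInt a n h x = (1 / Real.Gamma n) * ∫ t in a..x, (x - t) ^ (n - 1) * h t := by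
  simp [rlInt, hn]

lemma rlInt_one (a : ℝ) (h : ℝ → ℝ) (x : ℝ) : rlInt a 1 h x = ∫ t in a..x, h t := by
  rw [rlInt_def one_ne_zero]
  simp [Real.Gamma_one]

lemma ker_intInt {c : ℝ} (hc : 0 < c) {a x : ℝ} (hax : a ≤ x) :
    IntervalIntegrable (fun t : ℝ => (x - t) ^ (c - 1)) volume a x := by
  have := (intervalIntegrable_rpow' (a := x - x) (b := x - a) (r := c - 1) (by linarith))
  have h2 := this.comp_sub_left x
  exact (by simpa using h2 : IntervalIntegrable _ volume x a).symm

lemma kernel_intervalIntegrable {c : ℝ} (hc : 0 < c) {h : ℝ → ℝ} {a x : ℝ} (hax : a ≤ x)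
    (hh : ContinuousOn h (Icc a x)) :
    IntervalIntegrable (fun t => (x - t) ^ (c - 1) * h t) volume a x := by
  apply (ker_intInt hc hax).mul_continuousOn
  rwa [uIcc_of_le hax]

lemma int_ker {d : ℝ} (hd : 0 < d) {s t : ℝ} (hst : s ≤ t) :
    ∫ u in s..t, (t - u) ^ (d - 1) = (t - s) ^ d / d := by
  have h1 : (∫ u in s..t, (fun v : ℝ => v ^ (d - 1)) (t - u)) =
      ∫ v in (t - t)..(t - s), v ^ (d - 1) := integral_comp_sub_left (fun v : ℝ => v ^ (d - 1)) t
  simp only [sub_self] at h1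
  rw [show (fun u => (t - u) ^ (d-1)) = fun u => (fun v : ℝ => v ^ (d - 1)) (t - u) from rfl,
    h1, integral_rpow (Or.inl (by linarith))]
  rw [Real.zero_rpow (by linarith : d - 1 + 1 ≠ 0)]
  ring_nf
lemma beta_real {c d : ℝ} (hc : 0 < c) (hd : 0 < d) :
    ∫ u in (0:ℝ)..1, u ^ (d - 1) * (1 - u) ^ (c - 1)
      = Real.Gamma c * Real.Gamma d / Real.Gamma (c + d) := by
  have hB := Complex.Gamma_mul_Gamma_eq_betaIntegral (s := (d : ℂ)) (t := (c : ℂ))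
    (by simpa using hd) (by simpa using hc)
  have hcast : Complex.betaIntegral d c
      = ((∫ u in (0:ℝ)..1, u ^ (d - 1) * (1 - u) ^ (c - 1) : ℝ) : ℂ) := by
    rw [Complex.betaIntegral, ← intervalIntegral.integral_ofReal]
    apply intervalIntegral.integral_congr
    intro u hu
    rw [uIcc_of_le (by norm_num : (0:ℝ) ≤ 1)] at hu
    simp only [Complex.ofReal_mul]
    rw [Complex.ofReal_cpow hu.1, Complex.ofReal_cpow (by linarith [hu.2] : (0:ℝ) ≤ 1 - u)]
    push_cast
    ring
  rw [hcast, ← Complex.ofReal_add, Complex.Gamma_ofReal, Complex.Gamma_ofReal,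
    Complex.Gamma_ofReal, ← Complex.ofReal_mul, ← Complex.ofReal_mul] at hB
  have hB' := Complex.ofReal_injective hB
  have hΓ : Real.Gamma (c + d) ≠ 0 := (Real.Gamma_pos_of_pos (by linarith)).ne'
  rw [add_comm d c] at hB'
  field_simp
  linarith [hB']
lemma kernel_integral {c d : ℝ} (hc : 0 < c) (hd : 0 < d) {s x : ℝ} (hsx : s < x) :
    ∫ t in s..x, (x - t) ^ (c - 1) * (t - s) ^ (d - 1)
      = Real.Gamma c * Real.Gamma d / Real.Gamma (c + d) * (x - s) ^ (c + d - 1) := by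
  have hxs : (0:ℝ) < x - s := by linarith
  set f : ℝ → ℝ := fun t => (x - t) ^ (c - 1) * (t - s) ^ (d - 1) with hf
  have h1 : ∫ u in (0:ℝ)..1, f ((x - s) * u + s)
      = (x - s)⁻¹ • ∫ t in ((x-s) * 0 + s)..((x-s) * 1 + s), f t :=
    integral_comp_mul_add f hxs.ne' s
  have h2 : ((x-s) * 0 + s) = s := by ring
  have h3 : ((x-s) * 1 + s) = x := by ring
  rw [h2, h3, smul_eq_mul] at h1
  have h4 : ∫ t in s..x, f t = (x - s) * ∫ u in (0:ℝ)..1, f ((x - s) * u + s) := by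
    rw [h1]; field_simp
  have h5 : ∫ u in (0:ℝ)..1, f ((x - s) * u + s)
      = (x-s) ^ (c-1) * (x-s) ^ (d-1) * ∫ u in (0:ℝ)..1, u ^ (d - 1) * (1 - u) ^ (c - 1) := by
    rw [← intervalIntegral.integral_const_mul]
    apply intervalIntegral.integral_congr
    intro u hu
    rw [uIcc_of_le (by norm_num : (0:ℝ) ≤ 1)] at hu
    have e1 : x - ((x - s) * u + s) = (x - s) * (1 - u) := by ring
    have e2 : (x - s) * u + s - s = (x - s) * u := by ring
    simp only [hf, e1, e2]
    rw [Real.mul_rpow hxs.le (by linarith [hu.2]), Real.mul_rpow hxs.le hu.1]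
    ring
  rw [h4, h5, beta_real hc hd]
  have : (x - s) * ((x-s) ^ (c-1) * (x-s) ^ (d-1)) = (x - s) ^ (c + d - 1) := by
    rw [← Real.rpow_add hxs, mul_comm, ← Real.rpow_add_one hxs.ne']
    congr 1
    ring
  rw [← mul_assoc, this]
  ring
lemma rlInt_continuousOn {a b c : ℝ} (hab : a ≤ b) (hc : 0 < c) {g : ℝ → ℝ}
    (hg : Continuous g) : ContinuousOn (rlInt a c g) (Icc a b) := by
  obtain ⟨C, hC0, hC⟩ : ∃ C, 0 ≤ C ∧ ∀ y ∈ Icc (2*a - b) b, |g y| ≤ C := by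
    obtain ⟨C, hC⟩ := (isCompact_Icc (a := 2*a-b) (b := b)).exists_bound_of_continuousOn
      hg.continuousOn
    exact ⟨max C 0, le_max_right _ _, fun y hy => le_trans (hC y hy) (le_max_left _ _)⟩
  set F : ℝ → ℝ → ℝ :=
    fun x u => Set.indicator (Ioc 0 (x - a)) (fun u => u ^ (c-1) * g (x - u)) u with hFdef
  have key : ∀ x ∈ Icc a b, rlInt a c g x = (1 / Real.Gamma c) * ∫ u in (0:ℝ)..(b - a), F x u := by
    intro x hx
    rw [rlInt_def hc.ne']
    congr 1
    have h1 : (∫ t in a..x, (x - t) ^ (c-1) * g t)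
        = ∫ t in a..x, (fun u => u ^ (c-1) * g (x - u)) (x - t) := by
      apply intervalIntegral.integral_congr; intro t _; simp
    rw [h1, integral_comp_sub_left (fun u => u ^ (c-1) * g (x - u)) x, sub_self]
    rw [intervalIntegral.integral_of_le (by linarith [hx.1] : (0:ℝ) ≤ x - a),
        intervalIntegral.integral_of_le (by linarith [hx.1, hx.2] : (0:ℝ) ≤ b - a)]
    have h2 : ∫ u in Ioc 0 (b-a), F x u
        = ∫ u in Ioc 0 (x-a), (fun u => u ^ (c-1) * g (x-u)) u := by
      rw [hFdef]
      rw [MeasureTheory.integral_indicator measurableSet_Ioc,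
          MeasureTheory.Measure.restrict_restrict measurableSet_Ioc,
          Set.inter_eq_self_of_subset_left (Ioc_subset_Ioc le_rfl (by linarith [hx.2]))]
    rw [h2]
  have hcont : ContinuousOn
      (fun x => (1 / Real.Gamma c) * ∫ u in (0:ℝ)..(b - a), F x u) (Icc a b) := by
    refine continuousOn_const.mul ?_
    intro x₀ hx₀
    have hba : (0:ℝ) ≤ b - a := by linarith
    apply continuousWithinAt_of_dominated_interval (bound := fun u => u ^ (c-1) * C)
    · apply Filter.Eventually.of_forall
      intro x
      have hm : Measurable (fun u : ℝ => u ^ (c-1) * g (x - u)) := by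
        have h1 : Measurable (fun u : ℝ => u ^ (c-1)) := by measurability
        exact h1.mul (hg.measurable.comp (measurable_const.sub measurable_id))
      exact ((hm.indicator measurableSet_Ioc).aestronglyMeasurable)
    · filter_upwards [self_mem_nhdsWithin] with x hx
      apply Filter.Eventually.of_forall
      intro u hu
      rw [uIoc_of_le hba] at hu
      by_cases hu2 : u ∈ Ioc 0 (x - a)
      · rw [hFdef]
        simp only
        rw [Set.indicator_of_mem hu2]
        rw [Real.norm_eq_abs, abs_mul, abs_of_nonneg (Real.rpow_nonneg hu.1.le _)]
        refine mul_le_mul_of_nonneg_left ?_ (Real.rpow_nonneg hu.1.le _)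
        refine hC _ (mem_Icc.mpr ⟨?_, ?_⟩)
        · rcases hx with ⟨hx1, hx2⟩; rcases hu2 with ⟨_, h2⟩; linarith
        · rcases hx with ⟨hx1, hx2⟩; linarith [hu.1]
      · rw [hFdef]; simp only
        rw [Set.indicator_of_notMem hu2]
        simp only [norm_zero]
        exact mul_nonneg (Real.rpow_nonneg hu.1.le _) hC0
    · exact (intervalIntegrable_rpow' (by linarith)).mul_const C
    · have hae : ∀ᵐ u : ℝ, u ≠ x₀ - a := by
        rw [MeasureTheory.ae_iff]
        simpa [not_not] using measure_singleton (x₀ - a)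
      filter_upwards [hae] with u hu hmem
      rw [uIoc_of_le hba] at hmem
      rcases lt_or_gt_of_ne hu with hlt | hgt
      · have hopen : ∀ᶠ x in 𝓝 x₀, F x u = u ^ (c-1) * g (x - u) := by
          have : ∀ᶠ x in 𝓝 x₀, u < x - a := by
            have h2 : ContinuousAt (fun x : ℝ => x - a) x₀ := by fun_prop
            exact h2.eventually (eventually_gt_nhds hlt)
          filter_upwards [this] with x hx
          rw [hFdef]; simp only
          rw [Set.indicator_of_mem (mem_Ioc.mpr ⟨hmem.1, hx.le⟩)]
        have hca : ContinuousAt (fun x => u ^ (c-1) * g (x - u)) x₀ :=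
          (continuous_const.mul (hg.comp (continuous_id.sub continuous_const))).continuousAt
        exact (hca.congr (EventuallyEq.symm hopen)).continuousWithinAt
      · have hopen : ∀ᶠ x in 𝓝 x₀, F x u = 0 := by
          have : ∀ᶠ x in 𝓝 x₀, x - a < u := by
            have h2 : ContinuousAt (fun x : ℝ => x - a) x₀ := by fun_prop
            exact h2.eventually (eventually_lt_nhds hgt)
          filter_upwards [this] with x hx
          rw [hFdef]; simp only
          rw [Set.indicator_of_notMem (by intro h; exact absurd h.2 (not_le.mpr hx))]
        exact ((continuousAt_const (y := (0:ℝ))).congr (EventuallyEq.symm hopen)).continuousWithinAt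
  exact hcont.congr key
lemma rlInt_semigroup {a c d : ℝ} (hc : 0 < c) (hd : 0 < d) {g : ℝ → ℝ}
    (hg : Continuous g) {x : ℝ} (hax : a ≤ x) :
    rlInt a c (rlInt a d g) x = rlInt a (c + d) g x := by
  obtain ⟨C, hC0, hC⟩ : ∃ C, 0 ≤ C ∧ ∀ y ∈ Icc a x, |g y| ≤ C := by
    obtain ⟨C, hC⟩ := (isCompact_Icc (a := a) (b := x)).exists_bound_of_continuousOn
      hg.continuousOn
    exact ⟨max C 0, le_max_right _ _, fun y hy => le_trans (hC y hy) (le_max_left _ _)⟩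
  have hΓc : Real.Gamma c ≠ 0 := (Real.Gamma_pos_of_pos hc).ne'
  have hΓd : Real.Gamma d ≠ 0 := (Real.Gamma_pos_of_pos hd).ne'
  have hΓcd : Real.Gamma (c + d) ≠ 0 := (Real.Gamma_pos_of_pos (by linarith)).ne'
  set B : ℝ := Real.Gamma c * Real.Gamma d / Real.Gamma (c + d) with hB
  set K : ℝ → ℝ → ℝ :=
    fun t s => if s ≤ t then (x - t) ^ (c-1) * ((t - s) ^ (d-1) * g s) else 0 with hK
  -- measurability of the uncurried kernel
  have hm : Measurable fun p : ℝ × ℝ => K p.1 p.2 := by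
    refine Measurable.ite (measurableSet_le measurable_snd measurable_fst) ?_ measurable_const
    have h1 : Measurable fun v : ℝ => v ^ (c-1) := by measurability
    have h2 : Measurable fun v : ℝ => v ^ (d-1) := by measurability
    exact (h1.comp (measurable_const.sub measurable_fst)).mul
      ((h2.comp (measurable_fst.sub measurable_snd)).mul (hg.measurable.comp measurable_snd))
  -- sections as indicators
  have hsect : ∀ t, (fun s => K t s)
      = Set.indicator (Iic t) (fun s => (x - t) ^ (c-1) * ((t - s) ^ (d-1) * g s)) := by
    intro t; funext s
    by_cases h : s ≤ t
    · rw [Set.indicator_of_mem (by simpa using h)]; simp [hK, h]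
    · rw [Set.indicator_of_notMem (by simpa using h)]; simp [hK, h]
  have hIic : ∀ t ∈ Ioc a x, Iic t ∩ Ioc a x = Ioc a t := by
    intro t ht; ext s
    simp only [mem_inter_iff, mem_Iic, mem_Ioc]
    exact ⟨fun ⟨h1, h2, _⟩ => ⟨h2, h1⟩, fun ⟨h1, h2⟩ => ⟨h2, h1, le_trans h2 ht.2⟩⟩
  -- inner integral rewrite
  have hinner : ∀ t ∈ Ioc a x,
      ∫ s in Ioc a x, K t s
        = (x - t) ^ (c-1) * ∫ s in a..t, (t - s) ^ (d-1) * g s := by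
    intro t ht
    rw [hsect t, MeasureTheory.integral_indicator measurableSet_Iic,
      Measure.restrict_restrict measurableSet_Iic, hIic t ht,
      intervalIntegral.integral_of_le ht.1.le, MeasureTheory.integral_const_mul _ _]
  -- section integrability
  have hsecInt : ∀ t ∈ Ioc a x, Integrable (fun s => K t s) (volume.restrict (Ioc a x)) := by
    intro t ht
    rw [hsect t]
    rw [integrable_indicator_iff measurableSet_Iic]
    have h1 : IntervalIntegrable (fun s => (x - t) ^ (c-1) * ((t - s) ^ (d-1) * g s))
        volume a t := by
      exact ((kernel_intervalIntegrable hd ht.1.le hg.continuousOn).const_mul _)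
    have h2 := (intervalIntegrable_iff_integrableOn_Ioc_of_le ht.1.le).mp h1
    rw [IntegrableOn, Measure.restrict_restrict measurableSet_Iic, hIic t ht]
    exact h2
  -- norm integral bound
  have hD0 : 0 ≤ C * ((x - a) ^ d / d) := by
    apply mul_nonneg hC0
    apply div_nonneg (Real.rpow_nonneg (by linarith) _) hd.le
  have hnormbd : ∀ t ∈ Ioc a x,
      (∫ s in Ioc a x, ‖K t s‖) ≤ (x - t) ^ (c-1) * (C * ((x - a) ^ d / d)) := by
    intro t ht
    have habs : (fun s => ‖K t s‖)
        = Set.indicator (Iic t) (fun s => (x - t) ^ (c-1) * ((t - s) ^ (d-1) * |g s|)) := by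
      funext s
      by_cases h : s ≤ t
      · rw [Set.indicator_of_mem (by simpa using h)]
        simp only [hK, if_pos h, Real.norm_eq_abs, abs_mul]
        rw [abs_of_nonneg (Real.rpow_nonneg (by linarith [ht.2]) _),
          abs_of_nonneg (Real.rpow_nonneg (by linarith [h]) _)]
      · rw [Set.indicator_of_notMem (by simpa using h)]
        simp [hK, h]
    rw [habs, MeasureTheory.integral_indicator measurableSet_Iic,
      Measure.restrict_restrict measurableSet_Iic, hIic t ht,
      MeasureTheory.integral_const_mul _ _]
    apply mul_le_mul_of_nonneg_left _ (Real.rpow_nonneg (by linarith [ht.2]) _)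
    have hint1 : IntegrableOn (fun s => (t - s) ^ (d-1) * |g s|) (Ioc a t) volume := by
      have := kernel_intervalIntegrable hd ht.1.le (hg.abs.continuousOn (s := Icc a t))
      exact (intervalIntegrable_iff_integrableOn_Ioc_of_le ht.1.le).mp this
    have hint2 : IntegrableOn (fun s => (t - s) ^ (d-1) * C) (Ioc a t) volume := by
      have := (ker_intInt hd ht.1.le).mul_const C
      exact (intervalIntegrable_iff_integrableOn_Ioc_of_le ht.1.le).mp this
    calc ∫ s in Ioc a t, (t - s) ^ (d-1) * |g s|
        ≤ ∫ s in Ioc a t, (t - s) ^ (d-1) * C := by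
          apply setIntegral_mono_on hint1 hint2 measurableSet_Ioc
          intro s hs
          exact mul_le_mul_of_nonneg_left
            (hC s ⟨hs.1.le, le_trans hs.2 ht.2⟩)
            (Real.rpow_nonneg (by linarith [hs.2]) _)
      _ = ((t - a) ^ d / d) * C := by
          rw [← intervalIntegral.integral_of_le ht.1.le, intervalIntegral.integral_mul_const,
            int_ker hd ht.1.le]
      _ ≤ C * ((x - a) ^ d / d) := by
          rw [mul_comm]
          apply mul_le_mul_of_nonneg_left _ hC0
          have := Real.rpow_le_rpow (x := t - a) (y := x - a) (by linarith [ht.1])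
            (by linarith [ht.2]) hd.le
          have hdpos := hd
          gcongr
  -- product integrability
  have hprod : Integrable (Function.uncurry K)
      ((volume.restrict (Ioc a x)).prod (volume.restrict (Ioc a x))) := by
    rw [Function.uncurry_def, MeasureTheory.integrable_prod_iff hm.aestronglyMeasurable]
    constructor
    · filter_upwards [ae_restrict_mem measurableSet_Ioc] with t ht
      exact hsecInt t ht
    · apply Integrable.mono' (g := fun t => (x - t) ^ (c-1) * (C * ((x - a) ^ d / d)))
      · have h1 := (ker_intInt hc hax).mul_const (C * ((x - a) ^ d / d))
        exact (intervalIntegrable_iff_integrableOn_Ioc_of_le hax).mp h1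
      · exact (hm.norm.aestronglyMeasurable).integral_prod_right'
      · filter_upwards [ae_restrict_mem measurableSet_Ioc] with t ht
        rw [Real.norm_of_nonneg (integral_nonneg (fun s => norm_nonneg _))]
        exact hnormbd t ht
  have hswap : (∫ t in Ioc a x, ∫ s in Ioc a x, K t s)
      = ∫ s in Ioc a x, ∫ t in Ioc a x, K t s :=
    MeasureTheory.integral_integral_swap hprod
  -- outer integral computation
  have houter : ∀ s ∈ Ioc a x, s ≠ x →
      (∫ t in Ioc a x, K t s) = B * (x - s) ^ (c + d - 1) * g s := by
    intro s hs hsx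
    have hsx' : s < x := lt_of_le_of_ne hs.2 hsx
    have hsectT : (fun t => K t s)
        = Set.indicator (Ici s) (fun t => (x - t) ^ (c-1) * ((t - s) ^ (d-1) * g s)) := by
      funext t
      by_cases h : s ≤ t
      · rw [Set.indicator_of_mem (by simpa using h)]; simp [hK, h]
      · rw [Set.indicator_of_notMem (by simpa using h)]; simp [hK, h]
    have hIci : Ici s ∩ Ioc a x = Icc s x := by
      ext t
      simp only [mem_inter_iff, mem_Ici, mem_Ioc, mem_Icc]
      exact ⟨fun ⟨h1, h2⟩ => ⟨h1, h2.2⟩, fun ⟨h1, h2⟩ => ⟨h1, lt_of_lt_of_le hs.1 h1, h2⟩⟩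
    rw [hsectT, MeasureTheory.integral_indicator measurableSet_Ici,
      Measure.restrict_restrict measurableSet_Ici, hIci,
      MeasureTheory.integral_Icc_eq_integral_Ioc,
      ← intervalIntegral.integral_of_le hsx'.le]
    have heq : ∫ t in s..x, (x - t) ^ (c-1) * ((t - s) ^ (d-1) * g s)
        = (∫ t in s..x, (x - t) ^ (c-1) * (t - s) ^ (d-1)) * g s := by
      rw [← intervalIntegral.integral_mul_const]
      apply intervalIntegral.integral_congr; intro u hu; ring
    rw [heq, kernel_integral hc hd hsx']
  -- assemble
  rw [rlInt_def hc.ne', rlInt_def (by linarith : c + d ≠ 0)]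
  have hLHS : ∫ t in a..x, (x - t) ^ (c-1) * rlInt a d g t
      = (1 / Real.Gamma d) * ∫ t in Ioc a x, ∫ s in Ioc a x, K t s := by
    rw [intervalIntegral.integral_of_le hax]
    rw [← MeasureTheory.integral_const_mul]
    apply setIntegral_congr_fun measurableSet_Ioc
    intro t ht
    dsimp only
    rw [hinner t ht, rlInt_def hd.ne']
    ring
  rw [hLHS, hswap]
  have hR : (∫ s in Ioc a x, ∫ t in Ioc a x, K t s)
      = B * ∫ s in a..x, (x - s) ^ (c + d - 1) * g s := by
    rw [intervalIntegral.integral_of_le hax, ← MeasureTheory.integral_const_mul]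
    apply setIntegral_congr_ae measurableSet_Ioc
    have hae : ∀ᵐ s : ℝ, s ≠ x := by
      rw [MeasureTheory.ae_iff]; simpa [not_not] using measure_singleton x
    filter_upwards [hae] with s hsx hs
    rw [houter s hs hsx]; ring
  rw [hR, hB]
  field_simp
lemma rlInt_contOn' {a b c : ℝ} (hab : a ≤ b) (hc : 0 ≤ c) {g : ℝ → ℝ}
    (hg : Continuous g) : ContinuousOn (rlInt a c g) (Icc a b) := by
  rcases eq_or_lt_of_le hc with h0 | h0
  · rw [← h0, rlInt_zero]; exact hg.continuousOn
  · exact rlInt_continuousOn hab h0 hg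

lemma rlInt_hasDerivWithinAt {a b c : ℝ} (hab : a < b) (hc : 0 ≤ c) {g : ℝ → ℝ}
    (hg : Continuous g) {x : ℝ} (hx : x ∈ Icc a b) :
    HasDerivWithinAt (rlInt a (c + 1) g) (rlInt a c g x) (Icc a b) x := by
  have hG : ContinuousOn (rlInt a c g) (Icc a b) := rlInt_contOn' hab.le hc hg
  have h1 : ∀ y ∈ Icc a b, rlInt a (c + 1) g y = ∫ t in a..y, rlInt a c g t := by
    intro y hy
    rcases eq_or_lt_of_le hc with h0 | h0
    · rw [← h0] at *
      rw [zero_add, rlInt_one, rlInt_zero]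
    · rw [add_comm, ← rlInt_semigroup one_pos h0 hg hy.1, rlInt_one]
  have hFTC : HasDerivWithinAt (fun y => ∫ t in a..y, rlInt a c g t)
      (rlInt a c g x) (Icc a b) x := by
    haveI : Fact (x ∈ Icc a b) := ⟨hx⟩
    apply intervalIntegral.integral_hasDerivWithinAt_right (t := Icc a b)
    · apply ContinuousOn.intervalIntegrable
      rw [uIcc_of_le hx.1]
      exact hG.mono (Icc_subset_Icc le_rfl hx.2)
    · exact ⟨Icc a b, self_mem_nhdsWithin, hG.aestronglyMeasurable measurableSet_Icc⟩
    · exact hG x hx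
  exact hFTC.congr h1 (h1 x hx)

lemma rlInt_iter_eq {a b : ℝ} (hab : a < b) {g : ℝ → ℝ} (hg : Continuous g) {c : ℝ}
    (hc : 0 ≤ c) :
    ∀ j i : ℕ, EqOn (iteratedDerivWithin j (rlInt a (c + (j + i : ℕ)) g) (Icc a b))
      (rlInt a (c + (i : ℕ)) g) (Icc a b) := by
  intro j
  induction j with
  | zero =>
    intro i y hy
    rw [show ((0:ℕ) + i : ℕ) = i from by omega, iteratedDerivWithin_zero]
  | succ j IH =>
    intro i y hy
    have hud : UniqueDiffWithinAt ℝ (Icc a b) y := uniqueDiffOn_Icc hab y hy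
    rw [iteratedDerivWithin_succ]
    rw [show (j + 1 + i : ℕ) = (j + (i + 1) : ℕ) from by omega]
    rw [derivWithin_congr (IH (i+1)) (IH (i+1) hy)]
    have hcast : (c + ((i + 1 : ℕ) : ℝ)) = (c + (i:ℕ)) + 1 := by push_cast; ring
    rw [hcast]
    exact ((rlInt_hasDerivWithinAt hab (by positivity) hg hy).derivWithin hud)

lemma rlInt_iter_diff {a b : ℝ} (hab : a < b) {g : ℝ → ℝ} (hg : Continuous g) {c : ℝ}
    (hc : 0 ≤ c) (j i : ℕ) {y : ℝ} (hy : y ∈ Icc a b) :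
    DifferentiableWithinAt ℝ
      (iteratedDerivWithin j (rlInt a (c + (j + (i+1) : ℕ)) g) (Icc a b)) (Icc a b) y := by
  have hEq := rlInt_iter_eq hab hg hc j (i+1)
  have hdiff : DifferentiableWithinAt ℝ (rlInt a (c + ((i+1:ℕ):ℝ)) g) (Icc a b) y := by
    have hcast : (c + ((i + 1 : ℕ) : ℝ)) = (c + (i:ℕ)) + 1 := by push_cast; ring
    rw [hcast]
    exact (rlInt_hasDerivWithinAt hab (by positivity) hg hy).differentiableWithinAt
  exact hdiff.congr (fun z hz => hEq hz) (hEq hy)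

lemma rlInt_congr {a b c : ℝ} {h₁ h₂ : ℝ → ℝ} (h : EqOn h₁ h₂ (Icc a b)) :
    EqOn (rlInt a c h₁) (rlInt a c h₂) (Icc a b) := by
  rcases eq_or_ne c 0 with h0 | h0
  · rw [h0, rlInt_zero, rlInt_zero]; exact h
  · intro x hx
    rw [rlInt_def h0, rlInt_def h0]
    congr 1
    apply intervalIntegral.integral_congr
    intro t ht
    rw [uIcc_of_le hx.1] at ht
    have heq := h (mem_Icc.mpr ⟨ht.1, le_trans ht.2 hx.2⟩)
    simp only [heq]

lemma rl_helper {a b : ℝ} (hab : a < b) {g : ℝ → ℝ} (hg : Continuous g) {c : ℝ} (hc : 0 ≤ c)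
    (k : ℕ) {F : ℝ → ℝ} (hF : EqOn F (rlInt a (c + (k : ℕ)) g) (Icc a b)) :
    (∀ j < k, ∀ x ∈ Icc a b, DifferentiableWithinAt ℝ
        (iteratedDerivWithin j F (Icc a b)) (Icc a b) x) ∧
    (∀ x ∈ Icc a b, iteratedDerivWithin k F (Icc a b) x = rlInt a c g x) := by
  have hud : UniqueDiffOn ℝ (Icc a b) := uniqueDiffOn_Icc hab
  constructor
  · intro j hj x hx
    have hdiff := rlInt_iter_diff hab hg hc j (k - j - 1) hx
    rw [show (j + (k - j - 1 + 1) : ℕ) = k from by omega] at hdiff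
    exact hdiff.congr (fun z hz => iteratedDerivWithin_congr hF hz)
      (iteratedDerivWithin_congr hF hx)
  · intro x hx
    have h1 := iteratedDerivWithin_congr hF (n := k) hx
    rw [h1]
    have h2 := rlInt_iter_eq hab hg hc k 0
    rw [show (k + 0 : ℕ) = k from by omega] at h2
    have h3 := h2 hx
    rw [h3]
    norm_num

end RLAux

theorem rl_derivative_composition (a b n₁ n₂ : ℝ) (hab : a < b)
    (hn₁ : 0 < n₁) (hn₂ : 0 < n₂)
    (g : ℝ → ℝ) (hg : ContinuousOn g (Icc a b))
    (f : ℝ → ℝ) (hf : f = rlInt a (n₁ + n₂) g) :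
    (∀ k < ⌈n₂⌉₊, ∀ x ∈ Icc a b,
      DifferentiableWithinAt ℝ
        (iteratedDerivWithin k (rlInt a ((⌈n₂⌉₊ : ℝ) - n₂) f) (Icc a b)) (Icc a b) x) ∧
    (∀ x ∈ Icc a b,
      iteratedDerivWithin ⌈n₂⌉₊ (rlInt a ((⌈n₂⌉₊ : ℝ) - n₂) f) (Icc a b) x =
        rlInt a n₁ g x) ∧
    (∀ k < ⌈n₁⌉₊, ∀ x ∈ Icc a b,
      DifferentiableWithinAt ℝ
        (iteratedDerivWithin k
          (rlInt a ((⌈n₁⌉₊ : ℝ) - n₁)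
            (iteratedDerivWithin ⌈n₂⌉₊ (rlInt a ((⌈n₂⌉₊ : ℝ) - n₂) f) (Icc a b)))
          (Icc a b)) (Icc a b) x) ∧
    (∀ k < ⌈n₁ + n₂⌉₊, ∀ x ∈ Icc a b,
      DifferentiableWithinAt ℝ
        (iteratedDerivWithin k (rlInt a ((⌈n₁ + n₂⌉₊ : ℝ) - (n₁ + n₂)) f) (Icc a b))
        (Icc a b) x) ∧
    ∀ x ∈ Icc a b,
      iteratedDerivWithin ⌈n₁⌉₊
        (rlInt a ((⌈n₁⌉₊ : ℝ) - n₁)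
          (iteratedDerivWithin ⌈n₂⌉₊ (rlInt a ((⌈n₂⌉₊ : ℝ) - n₂) f) (Icc a b)))
        (Icc a b) x = g x ∧
      iteratedDerivWithin ⌈n₁ + n₂⌉₊ (rlInt a ((⌈n₁ + n₂⌉₊ : ℝ) - (n₁ + n₂)) f)
        (Icc a b) x = g x := by
  have hab' : a ≤ b := hab.le
  set gE : ℝ → ℝ := fun t => g (max a (min t b)) with hgE
  have hgEc : Continuous gE := by
    apply hg.comp_continuous
    · exact continuous_const.max (continuous_id.min continuous_const)
    · intro t
      exact mem_Icc.mpr ⟨le_max_left _ _, max_le hab' (min_le_right t b)⟩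
  have hgEeq : EqOn gE g (Icc a b) := by
    intro t ht
    simp only [hgE]
    rw [min_eq_left ht.2, max_eq_right ht.1]
  have hud : UniqueDiffOn ℝ (Icc a b) := uniqueDiffOn_Icc hab
  set m₁ := ⌈n₁⌉₊ with hm₁def
  set m₂ := ⌈n₂⌉₊ with hm₂def
  set M := ⌈n₁ + n₂⌉₊ with hMdef
  have hm₂ : n₂ ≤ (m₂ : ℝ) := Nat.le_ceil n₂
  have hm₁ : n₁ ≤ (m₁ : ℝ) := Nat.le_ceil n₁
  have hM : n₁ + n₂ ≤ (M : ℝ) := Nat.le_ceil _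
  have hfE : EqOn f (rlInt a (n₁ + n₂) gE) (Icc a b) := by
    rw [hf]; exact rlInt_congr hgEeq.symm
  -- chain 1
  have hF₁ : EqOn (rlInt a ((m₂ : ℝ) - n₂) f) (rlInt a (n₁ + (m₂ : ℕ)) gE) (Icc a b) := by
    have h1 : EqOn (rlInt a ((m₂:ℝ) - n₂) f)
        (rlInt a ((m₂:ℝ) - n₂) (rlInt a (n₁ + n₂) gE)) (Icc a b) := rlInt_congr hfE
    rcases eq_or_lt_of_le (sub_nonneg.mpr hm₂ : (0:ℝ) ≤ (m₂:ℝ) - n₂) with h0 | h0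
    · intro x hx
      rw [h1 hx, ← h0, rlInt_zero]
      have h2 : (m₂:ℝ) = n₂ := by linarith
      rw [h2]
    · intro x hx
      rw [h1 hx, rlInt_semigroup h0 (by positivity) hgEc hx.1]
      have h2 : ((m₂:ℝ) - n₂) + (n₁ + n₂) = n₁ + (m₂:ℝ) := by ring
      rw [h2]
  obtain ⟨hd₁, he₁⟩ := rl_helper hab hgEc hn₁.le m₂ hF₁
  -- chain 2
  have hInner : EqOn (iteratedDerivWithin m₂ (rlInt a ((m₂:ℝ) - n₂) f) (Icc a b))
      (rlInt a n₁ gE) (Icc a b) := fun x hx => he₁ x hx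
  have hF₂ : EqOn (rlInt a ((m₁:ℝ) - n₁)
        (iteratedDerivWithin m₂ (rlInt a ((m₂:ℝ) - n₂) f) (Icc a b)))
      (rlInt a ((0:ℝ) + (m₁ : ℕ)) gE) (Icc a b) := by
    have h1 := rlInt_congr (c := (m₁:ℝ) - n₁) hInner
    rcases eq_or_lt_of_le (sub_nonneg.mpr hm₁ : (0:ℝ) ≤ (m₁:ℝ) - n₁) with h0 | h0
    · intro x hx
      rw [h1 hx, ← h0, rlInt_zero]
      have h2 : (m₁:ℝ) = n₁ := by linarith
      rw [zero_add, h2]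
    · intro x hx
      rw [h1 hx, rlInt_semigroup h0 hn₁ hgEc hx.1]
      have h2 : ((m₁:ℝ) - n₁) + n₁ = 0 + (m₁:ℝ) := by ring
      rw [h2]
  obtain ⟨hd₂, he₂⟩ := rl_helper hab hgEc le_rfl m₁ hF₂
  -- chain 3
  have hF₃ : EqOn (rlInt a ((M:ℝ) - (n₁ + n₂)) f) (rlInt a ((0:ℝ) + (M : ℕ)) gE) (Icc a b) := by
    have h1 : EqOn (rlInt a ((M:ℝ) - (n₁ + n₂)) f)
        (rlInt a ((M:ℝ) - (n₁ + n₂)) (rlInt a (n₁ + n₂) gE)) (Icc a b) := rlInt_congr hfE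
    rcases eq_or_lt_of_le (sub_nonneg.mpr hM : (0:ℝ) ≤ (M:ℝ) - (n₁ + n₂)) with h0 | h0
    · intro x hx
      rw [h1 hx, ← h0, rlInt_zero]
      have h2 : (M:ℝ) = n₁ + n₂ := by linarith
      rw [zero_add, h2]
    · intro x hx
      rw [h1 hx, rlInt_semigroup h0 (by positivity) hgEc hx.1]
      have h2 : ((M:ℝ) - (n₁ + n₂)) + (n₁ + n₂) = 0 + (M:ℝ) := by ring
      rw [h2]
  obtain ⟨hd₃, he₃⟩ := rl_helper hab hgEc le_rfl M hF₃
  refine ⟨hd₁, ?_, hd₂, hd₃, ?_⟩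
  · intro x hx
    rw [he₁ x hx]
    exact rlInt_congr hgEeq hx
  · intro x hx
    constructor
    · rw [he₂ x hx, rlInt_zero]
      exact hgEeq hx
    · rw [he₃ x hx, rlInt_zero]
      exact hgEeq hx
end

section
/- Let $a < b$ be real numbers, $n > 0$, let $g : [a,b] \to \mathbb{R}$ be continuous, and set $f := J_a^n g$. Then with $m := \lceil n \rceil$, the fractional derivative $D_a^n f = \frac{d^m}{dx^m} J_a^{m-n} f$ exists classically everywhere on $[a,b]$, and $J_a^n (D_a^n f)(x) = f(x)$ for every $x \in [a,b]$. (This is the paper's Corollary that $\mathcal{J}_a^n \mathcal{D}_a^n f = f$ whenever $f$ lies in the range of $\mathcal{J}_a^n$, stated for continuous $g$.) -/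
open MeasureTheory Set

open intervalIntegral

lemma real_beta {p q : ℝ} (hp : 0 < p) (hq : 0 < q) :
    Real.Gamma p * Real.Gamma q =
      Real.Gamma (p + q) * ∫ u in (0:ℝ)..1, u ^ (p - 1) * (1 - u) ^ (q - 1) := by
  have h := Complex.Gamma_mul_Gamma_eq_betaIntegral (s := (p:ℂ)) (t := (q:ℂ))
    (by simpa using hp) (by simpa using hq)
  rw [Complex.betaIntegral] at h
  have hi : (∫ u : ℝ in (0:ℝ)..1, (u:ℂ) ^ ((p:ℂ) - 1) * (1 - (u:ℂ)) ^ ((q:ℂ) - 1))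
      = ((∫ u in (0:ℝ)..1, u ^ (p - 1) * (1 - u) ^ (q - 1) : ℝ) : ℂ) := by
    rw [← intervalIntegral.integral_ofReal]
    apply intervalIntegral.integral_congr
    intro u hu
    rw [uIcc_of_le zero_le_one] at hu
    show _ = ((_ * _ : ℝ) : ℂ)
    rw [Complex.ofReal_mul, Complex.ofReal_cpow hu.1, Complex.ofReal_cpow (by linarith [hu.2] : (0:ℝ) ≤ 1 - u)]
    push_cast
    ring
  rw [hi, ← Complex.ofReal_add, Complex.Gamma_ofReal, Complex.Gamma_ofReal,
    Complex.Gamma_ofReal, ← Complex.ofReal_mul, ← Complex.ofReal_mul] at h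
  exact_mod_cast h

lemma rl_beta_eval {p q t x : ℝ} (hp : 0 < p) (hq : 0 < q) (htx : t < x) :
    (∫ s in t..x, (x - s) ^ (p - 1) * (s - t) ^ (q - 1)) =
      (x - t) ^ (p + q - 1) * (Real.Gamma p * Real.Gamma q / Real.Gamma (p + q)) := by
  set c : ℝ := x - t with hc
  have hc0 : 0 < c := by simp [hc]; linarith
  have h1 : (∫ s in t..x, (x - s) ^ (p - 1) * (s - t) ^ (q - 1))
      = ∫ v in (0:ℝ)..c, (c - v) ^ (p - 1) * v ^ (q - 1) := by
    have h := intervalIntegral.integral_comp_add_right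
      (a := (0:ℝ)) (b := c) (fun s => (x - s) ^ (p - 1) * (s - t) ^ (q - 1)) t
    rw [zero_add, hc, sub_add_cancel] at h
    rw [← h]
    apply intervalIntegral.integral_congr
    intro v _
    have e1 : x - (v + t) = c - v := by rw [hc]; ring
    have e2 : v + t - t = v := by ring
    simp only [e1, e2]
  have h2 : (∫ u in (0:ℝ)..1, (fun v => (c - v) ^ (p - 1) * v ^ (q - 1)) (u * c))
      = c⁻¹ • ∫ v in (0:ℝ)..c, (c - v) ^ (p - 1) * v ^ (q - 1) := by
    have h := intervalIntegral.integral_comp_mul_right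
      (a := (0:ℝ)) (b := 1) (fun v => (c - v) ^ (p - 1) * v ^ (q - 1)) hc0.ne'
    rwa [zero_mul, one_mul] at h
  have h3 : (∫ u in (0:ℝ)..1, (fun v => (c - v) ^ (p - 1) * v ^ (q - 1)) (u * c))
      = (c ^ (p - 1) * c ^ (q - 1)) * ∫ u in (0:ℝ)..1, u ^ (q - 1) * (1 - u) ^ (p - 1) := by
    rw [← intervalIntegral.integral_const_mul]
    apply intervalIntegral.integral_congr
    intro u hu
    rw [uIcc_of_le zero_le_one] at hu
    simp only []
    have e1 : c - u * c = c * (1 - u) := by ring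
    rw [e1, Real.mul_rpow hc0.le (by linarith [hu.2]), mul_comm u c,
      Real.mul_rpow hc0.le hu.1]
    ring
  have hB := real_beta hq hp
  have hG : Real.Gamma (p + q) ≠ 0 := (Real.Gamma_pos_of_pos (by linarith)).ne'
  have hBval : (∫ u in (0:ℝ)..1, u ^ (q - 1) * (1 - u) ^ (p - 1))
      = Real.Gamma p * Real.Gamma q / Real.Gamma (p + q) := by
    rw [add_comm p q] at hG ⊢
    field_simp at hB ⊢
    linarith [hB]
  have h4 : (∫ v in (0:ℝ)..c, (c - v) ^ (p - 1) * v ^ (q - 1))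
      = c • ((c ^ (p - 1) * c ^ (q - 1)) * (Real.Gamma p * Real.Gamma q / Real.Gamma (p + q))) := by
    rw [← hBval, ← h3, h2, smul_smul, mul_inv_cancel₀ hc0.ne', one_smul]
  rw [h1, h4, smul_eq_mul, show p + q - 1 = 1 + (p - 1) + (q - 1) by ring,
    Real.rpow_add hc0, Real.rpow_add hc0, Real.rpow_one]
  ring


lemma rl_kernel_int {c : ℝ} (hc : -1 < c) {G : ℝ → ℝ} (hG : Continuous G) (a x : ℝ) :
    IntervalIntegrable (fun t => (x - t) ^ c * G t) volume a x := by
  apply IntervalIntegrable.mul_continuousOn _ hG.continuousOn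
  have h := (intervalIntegrable_rpow' (a := x - a) (b := x - x) hc).comp_sub_left x
  simpa using h

lemma rl_semigroup {p q : ℝ} (hp : 0 < p) (hq : 0 < q) {G : ℝ → ℝ} (hG : Continuous G)
    {a x : ℝ} (hax : a ≤ x) :
    rlInt a p (rlInt a q G) x = rlInt a (p + q) G x := by
  have hΓp := Real.Gamma_pos_of_pos hp
  have hΓq := Real.Gamma_pos_of_pos hq
  have hΓpq := Real.Gamma_pos_of_pos (add_pos hp hq)
  have hq1 : (-1:ℝ) < q - 1 := by linarith
  have hp1 : (-1:ℝ) < p - 1 := by linarith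
  rcases eq_or_lt_of_le hax with rfl | hax
  · simp [rlInt, hp.ne', hq.ne', (add_pos hp hq).ne']
  set μ := volume.restrict (Ioc a x) with hμ
  set F : ℝ × ℝ → ℝ := fun z => (x - z.1) ^ (p - 1) * ((z.1 - z.2) ^ (q - 1) * G z.2) with hF
  set S : Set (ℝ × ℝ) := {z | a < z.2 ∧ z.2 ≤ z.1} with hS
  set K : ℝ × ℝ → ℝ := S.indicator F with hK
  have hKslice : ∀ s, (fun t => K (s, t)) = (Ioc a s).indicator (fun t => F (s, t)) := by
    intro s; funext t
    simp [hK, Set.indicator_apply, hS, Set.mem_Ioc]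
  have hFm : Measurable F := by
    apply Measurable.mul
    · fun_prop
    · exact (by fun_prop : Measurable fun z : ℝ × ℝ => (z.1 - z.2) ^ (q-1)).mul
        (hG.measurable.comp measurable_snd)
  have hSm : MeasurableSet S :=
    (measurableSet_lt measurable_const measurable_snd).inter
      (measurableSet_le measurable_snd measurable_fst)
  have hKm : Measurable K := hFm.indicator hSm
  obtain ⟨M, hM⟩ := (isCompact_Icc (a := a) (b := x)).exists_bound_of_continuousOn hG.continuousOn
  have hM0 : 0 ≤ M := le_trans (norm_nonneg (G a)) (hM a (left_mem_Icc.2 hax.le))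
  have hinner : ∀ s ∈ Ioc a x, (∫ t in Ioc a s, (s - t) ^ (q - 1)) = (s - a) ^ q / q := by
    intro s hs
    rw [← intervalIntegral.integral_of_le hs.1.le,
      intervalIntegral.integral_comp_sub_left (fun u => u ^ (q - 1)) s, sub_self,
      integral_rpow (Or.inl hq1)]
    have hqq : q - 1 + 1 = q := by ring
    rw [hqq, Real.zero_rpow hq.ne', sub_zero]
  -- integrability of each slice
  have hsliceInt : ∀ s ∈ Ioc a x, IntegrableOn (fun t => F (s, t)) (Ioc a s) volume := by
    intro s hs
    have h := ((rl_kernel_int hq1 hG a s).const_mul ((x - s) ^ (p - 1)))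
    exact (intervalIntegrable_iff_integrableOn_Ioc_of_le hs.1.le).1 h
  have hKint : Integrable K (μ.prod μ) := by
    rw [MeasureTheory.integrable_prod_iff hKm.aestronglyMeasurable]
    constructor
    · refine (ae_restrict_iff' measurableSet_Ioc).2 (Filter.Eventually.of_forall fun s hs => ?_)
      rw [hKslice s, integrable_indicator_iff measurableSet_Ioc, IntegrableOn, hμ,
        Measure.restrict_restrict measurableSet_Ioc, Ioc_inter_Ioc, max_self,
        min_eq_left hs.2]
      exact hsliceInt s hs
    · have hbound : ∀ s ∈ Ioc a x,
          (∫ t, ‖K (s, t)‖ ∂μ) ≤ (x - s) ^ (p - 1) * (M * ((x - a) ^ q / q)) := by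
        intro s hs
        have hxs : (0:ℝ) ≤ x - s := by linarith [hs.2]
        have hpt : ∀ t, K (s, t) = (Ioc a s).indicator (fun t => F (s, t)) t :=
          fun t => congrFun (hKslice s) t
        have e1 : (∫ t, ‖K (s, t)‖ ∂μ) = ∫ t in Ioc a s, ‖F (s, t)‖ := by
          simp only [hpt]
          simp_rw [norm_indicator_eq_indicator_norm]
          rw [MeasureTheory.integral_indicator measurableSet_Ioc, hμ,
            Measure.restrict_restrict measurableSet_Ioc, Ioc_inter_Ioc, max_self,
            min_eq_left hs.2]
        have e2 : (∫ t in Ioc a s, ‖F (s, t)‖)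
            ≤ ∫ t in Ioc a s, (x - s) ^ (p - 1) * (M * (s - t) ^ (q - 1)) := by
          apply setIntegral_mono_on (hsliceInt s hs).norm _ measurableSet_Ioc
          · intro t ht
            have hst : (0:ℝ) ≤ s - t := by linarith [ht.2]
            have hGt : |G t| ≤ M := hM t ⟨ht.1.le, le_trans ht.2 hs.2⟩
            simp only [hF, Real.norm_eq_abs]
            rw [abs_mul, abs_mul, abs_of_nonneg (Real.rpow_nonneg hxs _),
              abs_of_nonneg (Real.rpow_nonneg hst _)]
            rw [mul_comm M _]
            apply mul_le_mul_of_nonneg_left _ (Real.rpow_nonneg hxs _)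
            exact mul_le_mul_of_nonneg_left hGt (Real.rpow_nonneg hst _)
          · apply Integrable.const_mul
            apply Integrable.const_mul
            have h3 : IntervalIntegrable (fun t => (s - t) ^ (q - 1)) volume a s := by
              simpa using
                (intervalIntegrable_rpow' (a := s - a) (b := s - s) hq1).comp_sub_left s
            exact (intervalIntegrable_iff_integrableOn_Ioc_of_le hs.1.le).1 h3
        have e3 : (∫ t in Ioc a s, (x - s) ^ (p - 1) * (M * (s - t) ^ (q - 1)))
            = (x - s) ^ (p - 1) * (M * ((s - a) ^ q / q)) := by
          rw [MeasureTheory.integral_const_mul, MeasureTheory.integral_const_mul, hinner s hs]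
        have e4 : (x - s) ^ (p - 1) * (M * ((s - a) ^ q / q))
            ≤ (x - s) ^ (p - 1) * (M * ((x - a) ^ q / q)) := by
          have h5 : (s - a) ^ q ≤ (x - a) ^ q :=
            Real.rpow_le_rpow (by linarith [hs.1]) (by linarith [hs.2]) hq.le
          apply mul_le_mul_of_nonneg_left _ (Real.rpow_nonneg hxs _)
          apply mul_le_mul_of_nonneg_left _ hM0
          exact (div_le_div_iff_of_pos_right hq).2 h5
        calc (∫ t, ‖K (s, t)‖ ∂μ) = _ := e1
          _ ≤ _ := e2
          _ = _ := e3
          _ ≤ _ := e4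
      have hmaj : Integrable (fun s => (x - s) ^ (p - 1) * (M * ((x - a) ^ q / q))) μ := by
        have h := rl_kernel_int hp1 (continuous_const (y := M * ((x - a) ^ q / q))) a x
        rw [hμ]
        exact (intervalIntegrable_iff_integrableOn_Ioc_of_le hax.le).1 h
      apply hmaj.mono ((hKm.norm.stronglyMeasurable.integral_prod_right').aestronglyMeasurable)
      refine (ae_restrict_iff' measurableSet_Ioc).2 (Filter.Eventually.of_forall fun s hs => ?_)
      have h1 : ‖∫ t, ‖K (s, t)‖ ∂μ‖ = ∫ t, ‖K (s, t)‖ ∂μ :=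
        Real.norm_of_nonneg (integral_nonneg fun t => norm_nonneg _)
      rw [h1]
      exact le_trans (hbound s hs) (le_abs_self _)
  have e0a : (∫ s in a..x, (x - s) ^ (p - 1) *
        ((1 / Real.Gamma q) * ∫ t in a..s, (s - t) ^ (q - 1) * G t))
      = (1 / Real.Gamma q) * ∫ s in Ioc a x, (∫ t, K (s, t) ∂μ) := by
    rw [← MeasureTheory.integral_const_mul, intervalIntegral.integral_of_le hax.le]
    apply setIntegral_congr_fun measurableSet_Ioc
    intro s hs
    have hpt : ∀ t, K (s, t) = (Ioc a s).indicator (fun t => F (s, t)) t :=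
      fun t => congrFun (hKslice s) t
    simp only [hpt]
    rw [MeasureTheory.integral_indicator measurableSet_Ioc, hμ,
      Measure.restrict_restrict measurableSet_Ioc, Ioc_inter_Ioc, max_self, min_eq_left hs.2,
      ← intervalIntegral.integral_of_le hs.1.le]
    simp only [hF]
    rw [intervalIntegral.integral_const_mul]
    ring
  have eswap : (∫ s in Ioc a x, (∫ t, K (s, t) ∂μ)) = ∫ t in Ioc a x, (∫ s, K (s, t) ∂μ) :=
    MeasureTheory.integral_integral_swap (f := fun s t => K (s, t)) hKint
  have e3 : ∀ t ∈ Ioo a x, (∫ s, K (s, t) ∂μ)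
      = (Real.Gamma p * Real.Gamma q / Real.Gamma (p + q)) * ((x - t) ^ (p + q - 1) * G t) := by
    intro t ht
    have hpt : ∀ s, K (s, t) = (Ici t).indicator (fun s => F (s, t)) s := by
      intro s
      simp [hK, hS, Set.indicator_apply, Set.mem_Ici, Set.mem_setOf_eq, ht.1]
    simp only [hpt]
    rw [MeasureTheory.integral_indicator measurableSet_Ici, hμ,
      Measure.restrict_restrict measurableSet_Ici]
    have hinter : Ici t ∩ Ioc a x = Icc t x := by
      ext s
      simp only [Set.mem_inter_iff, Set.mem_Ici, Set.mem_Ioc, Set.mem_Icc]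
      exact ⟨fun h => ⟨h.1, h.2.2⟩, fun h => ⟨h.1, lt_of_lt_of_le ht.1 h.1, h.2⟩⟩
    rw [hinter, MeasureTheory.integral_Icc_eq_integral_Ioc,
      ← intervalIntegral.integral_of_le ht.2.le]
    simp only [hF]
    have hrw : ∀ s : ℝ, (x - s) ^ (p - 1) * ((s - t) ^ (q - 1) * G t)
        = ((x - s) ^ (p - 1) * (s - t) ^ (q - 1)) * G t := fun s => by ring
    simp only [hrw]
    rw [intervalIntegral.integral_mul_const, rl_beta_eval hp hq ht.2]
    ring
  have e4 : (∫ t in Ioc a x, (∫ s, K (s, t) ∂μ))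
      = (Real.Gamma p * Real.Gamma q / Real.Gamma (p + q))
          * ∫ t in a..x, (x - t) ^ (p + q - 1) * G t := by
    rw [MeasureTheory.integral_Ioc_eq_integral_Ioo,
      MeasureTheory.setIntegral_congr_fun measurableSet_Ioo (fun t ht => e3 t ht),
      MeasureTheory.integral_const_mul, intervalIntegral.integral_of_le hax.le,
      MeasureTheory.integral_Ioc_eq_integral_Ioo]
  simp only [rlInt, if_neg hp.ne', if_neg hq.ne', if_neg (add_pos hp hq).ne']
  rw [e0a, eswap, e4]
  field_simp

lemma rl_cont {c : ℝ} (hc : 0 ≤ c) {G : ℝ → ℝ} (hG : Continuous G) (a : ℝ) :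
    Continuous fun x => ∫ t in a..x, (x - t) ^ c * G t := by
  apply intervalIntegral.continuous_parametric_intervalIntegral_of_continuous
    (f := fun x t => (x - t) ^ c * G t) ?_ continuous_id
  exact ((continuous_fst.sub continuous_snd).rpow_const fun z => Or.inr hc).mul
    (hG.comp continuous_snd)

lemma rl_cont' (j : ℕ) {G : ℝ → ℝ} (hG : Continuous G) (a : ℝ) :
    Continuous (rlInt a (j:ℝ) G) := by
  rcases Nat.eq_zero_or_pos j with rfl | hj
  · simpa [rlInt] using hG
  · have hj0 : ((j:ℝ)) ≠ 0 := by positivity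
    simp only [rlInt, if_neg hj0]
    exact continuous_const.mul (rl_cont
      (by have : (1:ℝ) ≤ (j:ℝ) := by exact_mod_cast hj
          linarith) hG a)

lemma rl_one_eq {K : ℝ → ℝ} (a z : ℝ) : rlInt a 1 K z = ∫ t in a..z, K t := by
  simp [rlInt, Real.Gamma_one]

lemma rl_step {G : ℝ → ℝ} (hG : Continuous G) {a b : ℝ} (hab : a < b) (j : ℕ)
    {x : ℝ} (hx : x ∈ Icc a b) :
    HasDerivWithinAt (rlInt a ((j:ℝ) + 1) G) (rlInt a (j:ℝ) G x) (Icc a b) x := by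
  have hK : Continuous (rlInt a (j:ℝ) G) := rl_cont' j hG a
  have hFTC : HasDerivAt (fun z => ∫ t in a..z, rlInt a (j:ℝ) G t) (rlInt a (j:ℝ) G x) x :=
    (hK.integral_hasStrictDerivAt a x).hasDerivAt
  have heq : ∀ z ∈ Icc a b, rlInt a ((j:ℝ) + 1) G z = ∫ t in a..z, rlInt a (j:ℝ) G t := by
    intro z hz
    rcases Nat.eq_zero_or_pos j with rfl | hj
    · rw [show ((0:ℕ):ℝ) + 1 = 1 by norm_num, rl_one_eq]
      apply intervalIntegral.integral_congr
      intro t _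
      simp [rlInt]
    · have hjpos : (0:ℝ) < (j:ℝ) := by exact_mod_cast hj
      rw [show (j:ℝ) + 1 = 1 + (j:ℝ) by ring,
        ← rl_semigroup one_pos hjpos hG hz.1, rl_one_eq]
  exact (hFTC.hasDerivWithinAt).congr (fun z hz => heq z hz) (heq x hx)

lemma rl_iter {G : ℝ → ℝ} (hG : Continuous G) {a b : ℝ} (hab : a < b) (m : ℕ) :
    ∀ k, k ≤ m → EqOn (iteratedDerivWithin k (rlInt a (m:ℝ) G) (Icc a b))
      (rlInt a ((m - k : ℕ) : ℝ) G) (Icc a b) := by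
  intro k
  induction k with
  | zero => intro _ x hx; simp [iteratedDerivWithin_zero]
  | succ k ih =>
    intro hk x hx
    have hk' : k ≤ m := Nat.le_of_succ_le hk
    rw [iteratedDerivWithin_succ]
    rw [derivWithin_congr (ih hk') (ih hk' hx)]
    have hj : m - k = (m - (k + 1)) + 1 := by omega
    have hjc : ((m - k : ℕ) : ℝ) = ((m - (k+1) : ℕ) : ℝ) + 1 := by
      rw [hj]; push_cast; ring
    rw [hjc]
    exact ((rl_step hG hab (m - (k+1)) hx).derivWithin ((uniqueDiffOn_Icc hab) x hx))

lemma iterDW_congr {f g : ℝ → ℝ} {s : Set ℝ} (h : EqOn f g s) (k : ℕ) :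
    EqOn (iteratedDerivWithin k f s) (iteratedDerivWithin k g s) s := by
  intro x hx
  rw [iteratedDerivWithin_eq_iteratedFDerivWithin, iteratedDerivWithin_eq_iteratedFDerivWithin,
    (h.iteratedFDerivWithin k) hx]

lemma rlInt_congr_s10 {h1 h2 : ℝ → ℝ} {a b x nn : ℝ} (h : EqOn h1 h2 (Icc a b))
    (hx : x ∈ Icc a b) : rlInt a nn h1 x = rlInt a nn h2 x := by
  rcases eq_or_ne nn 0 with rfl | hnn
  · simp only [rlInt, if_pos rfl]
    exact h hx
  · simp only [rlInt, if_neg hnn]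
    congr 1
    apply intervalIntegral.integral_congr
    intro t ht
    rw [uIcc_of_le hx.1, Icc] at ht
    beta_reduce
    rw [h ⟨ht.1, le_trans ht.2 hx.2⟩]

theorem rl_integral_inverts_derivative_on_range (a b n : ℝ) (hab : a < b) (hn : 0 < n)
    (g : ℝ → ℝ) (hg : ContinuousOn g (Icc a b))
    (f : ℝ → ℝ) (hf : f = rlInt a n g) :
    (∀ k < ⌈n⌉₊, ∀ x ∈ Icc a b,
      DifferentiableWithinAt ℝ
        (iteratedDerivWithin k (rlInt a ((⌈n⌉₊ : ℝ) - n) f) (Icc a b)) (Icc a b) x) ∧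
    ∀ x ∈ Icc a b,
      rlInt a n (iteratedDerivWithin ⌈n⌉₊ (rlInt a ((⌈n⌉₊ : ℝ) - n) f) (Icc a b)) x =
        f x := by
  set m := ⌈n⌉₊ with hm
  have hm0 : 0 < m := Nat.ceil_pos.2 hn
  have hnm : n ≤ (m:ℝ) := Nat.le_ceil n
  set G : ℝ → ℝ := fun t => g (max a (min b t)) with hGdef
  have hGc : Continuous G :=
    hg.comp_continuous (continuous_const.max (continuous_const.min continuous_id))
      (fun t => ⟨le_max_left _ _, max_le hab.le (min_le_left _ _)⟩)
  have hGg : EqOn G g (Icc a b) := by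
    intro t ht
    simp only [hGdef]
    rw [min_eq_right ht.2, max_eq_right ht.1]
  have hfG : EqOn f (rlInt a n G) (Icc a b) := fun y hy =>
    (congrFun hf y).trans (rlInt_congr_s10 hGg.symm hy)
  have h2 : EqOn (rlInt a ((m:ℝ) - n) f) (rlInt a (m:ℝ) G) (Icc a b) := by
    rcases eq_or_lt_of_le hnm with he | hlt
    · have h0 : (m:ℝ) - n = 0 := by rw [← he]; ring
      intro y hy
      rw [h0, show rlInt a 0 f = f from if_pos rfl, ← he]
      exact hfG hy
    · have hmn : 0 < (m:ℝ) - n := by linarith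
      intro y hy
      have e1 : rlInt a ((m:ℝ) - n) f y = rlInt a ((m:ℝ) - n) (rlInt a n G) y :=
        rlInt_congr_s10 hfG hy
      rw [e1, rl_semigroup hmn hn hGc hy.1, sub_add_cancel]
  have h3 : ∀ k, EqOn (iteratedDerivWithin k (rlInt a ((m:ℝ) - n) f) (Icc a b))
      (iteratedDerivWithin k (rlInt a (m:ℝ) G) (Icc a b)) (Icc a b) :=
    fun k => iterDW_congr h2 k
  constructor
  · intro k hk x hx
    have hj : ((m - k : ℕ) : ℝ) = ((m - (k+1) : ℕ) : ℝ) + 1 := by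
      have h : m - k = (m - (k+1)) + 1 := by omega
      rw [h]; push_cast; ring
    have hdiff : DifferentiableWithinAt ℝ (rlInt a ((m - k : ℕ) : ℝ) G) (Icc a b) x := by
      rw [hj]
      exact (rl_step hGc hab (m - (k+1)) hx).differentiableWithinAt
    have heq : EqOn (iteratedDerivWithin k (rlInt a ((m:ℝ) - n) f) (Icc a b))
        (rlInt a ((m - k : ℕ) : ℝ) G) (Icc a b) :=
      fun y hy => ((h3 k) hy).trans (rl_iter hGc hab m k hk.le hy)
    exact hdiff.congr (fun y hy => heq hy) (heq hx)
  · intro x hx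
    have hDg : EqOn (iteratedDerivWithin m (rlInt a ((m:ℝ) - n) f) (Icc a b)) g (Icc a b) := by
      intro y hy
      have h := ((h3 m) hy).trans (rl_iter hGc hab m m le_rfl hy)
      rw [Nat.sub_self] at h
      rw [h, show ((0:ℕ):ℝ) = (0:ℝ) from Nat.cast_zero,
        show rlInt a 0 G = G from if_pos rfl]
      exact hGg hy
    rw [rlInt_congr_s10 hDg hx, hf]
end
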